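/- (Gronwall comparison for the LQ model) Let φⁿ, φ^∞ : [0,T] → ℝ be continuous and bounded, and let X^i, Y^i (i = 1,…,n) be continuous real-valued paths with X^i_0 = Y^i_0 satisfying, for all t, X^i_t − Y^i_t = ∫₀ᵗ [(b̄+q+(1−1/n)φⁿ_s)(X̄_s − X^i_s) − (b̄+q+φ^∞_s)(Ȳ_s − Y^i_s)] ds, where X̄_s = (1/n)∑ⱼ X^j_s and Ȳ_s = (1/n)∑ⱼ Y^j_s. Then there is a constant C depending only on T, b̄, q, and the uniform bounds on φⁿ, φ^∞ such that (1/n)∑_{i=1}^n sup_{t∈[0,T]}|X^i_t − Y^i_t| ≤ C · sup_{t∈[0,T]}|(1−1/n)φⁿ_t − φ^∞_t| · (1/n)∑_{i=1}^n sup_{t∈[0,T]}|X^i_t|. -/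

import Mathlib

open Set intervalIntegral Real MeasureTheory

lemma lq_le_biSup_abs {f : ℝ → ℝ} (hf : Continuous f) {a b s : ℝ} (hs : s ∈ Set.Icc a b) :
    |f s| ≤ ⨆ t ∈ Set.Icc a b, |f t| := by
  obtain ⟨x, hx, hxmax⟩ := isCompact_Icc.exists_isMaxOn ⟨s, hs⟩ (hf.abs.continuousOn)
  have hbdd : BddAbove (Set.range fun t => ⨆ _ : t ∈ Set.Icc a b, |f t|) := by
    refine ⟨max (|f x|) 0, ?_⟩
    rintro y ⟨t, rfl⟩
    by_cases h : t ∈ Set.Icc a b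
    · simp only []
      rw [ciSup_pos (p := t ∈ Set.Icc a b) (f := fun _ => |f t|) h]
      exact le_max_of_le_left (hxmax h)
    · simp only [h]
      rw [Real.iSup_of_isEmpty]
      exact le_max_right _ _
  calc |f s| = ⨆ _ : s ∈ Set.Icc a b, |f s| :=
        (ciSup_pos (p := s ∈ Set.Icc a b) (f := fun _ => |f s|) hs).symm
    _ ≤ ⨆ t, ⨆ _ : t ∈ Set.Icc a b, |f t| := le_ciSup hbdd s

lemma lq_biSup_abs_le {f : ℝ → ℝ} {a b B : ℝ} (hB : 0 ≤ B)
    (h : ∀ t ∈ Set.Icc a b, |f t| ≤ B) : (⨆ t ∈ Set.Icc a b, |f t|) ≤ B := by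
  refine Real.iSup_le (fun t => ?_) hB
  exact Real.iSup_le (fun ht => h t ht) hB

set_option maxHeartbeats 1000000 in
/-- Gronwall comparison for the LQ model.
Let `φⁿ, φ^∞ : [0,T] → ℝ` be continuous and bounded by `M`, and let `X^i, Y^i` be continuous
real paths with `X^i_0 = Y^i_0` satisfying
`X^i_t − Y^i_t = ∫₀ᵗ [(b̄+q+(1−1/n)φⁿ_s)(X̄_s − X^i_s) − (b̄+q+φ^∞_s)(Ȳ_s − Y^i_s)] ds`.
Then there is a constant `C` depending only on `T, b̄, q` and `M` such that
`(1/n)∑ᵢ sup_{[0,T]}|X^i − Y^i| ≤ C · sup_{[0,T]}|(1−1/n)φⁿ − φ^∞| · (1/n)∑ᵢ sup_{[0,T]}|X^i|`. -/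
theorem lq_gronwall_comparison (T b q M : ℝ) (hT : 0 < T) (hM : 0 ≤ M) :
    ∃ C : ℝ, ∀ (n : ℕ), 0 < n →
      ∀ (φn φi : ℝ → ℝ) (X Y : Fin n → ℝ → ℝ),
        Continuous φn → Continuous φi →
        (∀ t ∈ Set.Icc (0:ℝ) T, |φn t| ≤ M) →
        (∀ t ∈ Set.Icc (0:ℝ) T, |φi t| ≤ M) →
        (∀ i, Continuous (X i)) → (∀ i, Continuous (Y i)) →
        (∀ i, X i 0 = Y i 0) →
        (∀ i, ∀ t ∈ Set.Icc (0:ℝ) T,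
          X i t - Y i t =
            ∫ s in (0:ℝ)..t,
              ((b + q + (1 - 1 / (n : ℝ)) * φn s) * ((1 / (n : ℝ)) * ∑ j, X j s - X i s)
                - (b + q + φi s) * ((1 / (n : ℝ)) * ∑ j, Y j s - Y i s))) →
        (1 / (n : ℝ)) * ∑ i, (⨆ t ∈ Set.Icc (0:ℝ) T, |X i t - Y i t|) ≤
          C * (⨆ t ∈ Set.Icc (0:ℝ) T, |(1 - 1 / (n : ℝ)) * φn t - φi t|) *
            ((1 / (n : ℝ)) * ∑ i, ⨆ t ∈ Set.Icc (0:ℝ) T, |X i t|) := by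
  set K : ℝ := |b| + |q| + M with hKdef
  have hK : 0 ≤ K := by positivity
  set K' : ℝ := 2 * K + 1 with hK'def
  have hK'1 : 1 ≤ K' := by simp [hK'def]; linarith
  refine ⟨2 * Real.exp (K' * T), ?_⟩
  intro n hn φn φi X Y hφn hφi hφnM hφiM hX hY hXY0 hSDE
  have hn' : (0:ℝ) < n := by exact_mod_cast hn
  have hinv : (0:ℝ) ≤ 1 / n := by positivity
  -- notation
  set Δ : ℝ → ℝ := fun t => (1 - 1 / (n:ℝ)) * φn t - φi t with hΔdef
  have hΔcont : Continuous Δ := (continuous_const.mul hφn).sub hφi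
  set δ : ℝ := ⨆ t ∈ Set.Icc (0:ℝ) T, |Δ t| with hδdef
  have hT0 : (0:ℝ) ∈ Set.Icc (0:ℝ) T := ⟨le_refl 0, hT.le⟩
  have hδ0 : 0 ≤ δ := le_trans (abs_nonneg _) (lq_le_biSup_abs hΔcont hT0)
  have hΔle : ∀ s ∈ Set.Icc (0:ℝ) T, |Δ s| ≤ δ := fun s hs => lq_le_biSup_abs hΔcont hs
  set supX : Fin n → ℝ := fun i => ⨆ t ∈ Set.Icc (0:ℝ) T, |X i t| with hsupXdef
  have hsupX : ∀ i, ∀ s ∈ Set.Icc (0:ℝ) T, |X i s| ≤ supX i :=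
    fun i s hs => lq_le_biSup_abs (hX i) hs
  have hsupX0 : ∀ i, 0 ≤ supX i := fun i => le_trans (abs_nonneg _) (hsupX i 0 hT0)
  set S : ℝ := (1 / (n:ℝ)) * ∑ i, supX i with hSdef
  have hS0 : 0 ≤ S := by
    apply mul_nonneg hinv
    exact Finset.sum_nonneg fun i _ => hsupX0 i
  set Z : Fin n → ℝ → ℝ := fun i t => X i t - Y i t with hZdef
  have hZcont : ∀ i, Continuous (Z i) := fun i => (hX i).sub (hY i)
  set w : ℝ → ℝ := fun s => (1 / (n:ℝ)) * ∑ j, |Z j s| with hwdef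
  have hwcont : Continuous w :=
    continuous_const.mul (continuous_finset_sum _ fun j _ => (hZcont j).abs)
  have hw0 : ∀ s, 0 ≤ w s := fun s =>
    mul_nonneg hinv (Finset.sum_nonneg fun j _ => abs_nonneg _)
  set gB : Fin n → ℝ → ℝ := fun i s => K * (w s + |Z i s|) + δ * (S + supX i) with hgBdef
  have hgBcont : ∀ i, Continuous (gB i) :=
    fun i => ((continuous_const.mul (hwcont.add (hZcont i).abs)).add continuous_const)
  have hgB0 : ∀ i s, 0 ≤ gB i s := fun i s => by
    have := hw0 s
    have := hsupX0 i
    have := abs_nonneg (Z i s)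
    positivity
  set g : ℝ → ℝ := fun s => 2 * K * w s + 2 * (δ * S) with hgdef
  have hgcont : Continuous g := (continuous_const.mul hwcont).add continuous_const
  have hg0 : ∀ s, 0 ≤ g s := fun s => by have := hw0 s; positivity
  -- averages
  have hXsum : ∀ s ∈ Set.Icc (0:ℝ) T, (1 / (n:ℝ)) * ∑ j, |X j s| ≤ S := by
    intro s hs
    apply mul_le_mul_of_nonneg_left _ hinv
    exact Finset.sum_le_sum fun j _ => hsupX j s hs
  have hXbar : ∀ s, |(1 / (n:ℝ)) * ∑ j, X j s| ≤ (1 / (n:ℝ)) * ∑ j, |X j s| := by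
    intro s
    rw [abs_mul, abs_of_nonneg hinv]
    exact mul_le_mul_of_nonneg_left (Finset.abs_sum_le_sum_abs _ _) hinv
  have hZbar : ∀ s, |(1 / (n:ℝ)) * ∑ j, Z j s| ≤ w s := by
    intro s
    rw [abs_mul, abs_of_nonneg hinv]
    exact mul_le_mul_of_nonneg_left (Finset.abs_sum_le_sum_abs _ _) hinv
  -- Step A: pointwise bound on the integrand
  have hptwise : ∀ i, ∀ s ∈ Set.Icc (0:ℝ) T,
      |(b + q + (1 - 1 / (n:ℝ)) * φn s) * ((1 / (n:ℝ)) * ∑ j, X j s - X i s)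
        - (b + q + φi s) * ((1 / (n:ℝ)) * ∑ j, Y j s - Y i s)| ≤ gB i s := by
    intro i s hs
    have hiden : (b + q + (1 - 1 / (n:ℝ)) * φn s) * ((1 / (n:ℝ)) * ∑ j, X j s - X i s)
        - (b + q + φi s) * ((1 / (n:ℝ)) * ∑ j, Y j s - Y i s)
        = (b + q + φi s) * ((1 / (n:ℝ)) * ∑ j, Z j s - Z i s)
          + Δ s * ((1 / (n:ℝ)) * ∑ j, X j s - X i s) := by
      simp only [hZdef, hΔdef, Finset.sum_sub_distrib]
      ring
    have hB : |b + q + φi s| ≤ K := by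
      calc |b + q + φi s| ≤ |b| + |q| + |φi s| := by
            exact le_trans (abs_add_le _ _) (add_le_add_left (abs_add_le _ _) _)
        _ ≤ K := by simp [hKdef]; exact hφiM s hs
    have hu : |(1 / (n:ℝ)) * ∑ j, Z j s - Z i s| ≤ w s + |Z i s| :=
      le_trans (abs_sub _ _) (add_le_add_left (hZbar s) _)
    have hv : |(1 / (n:ℝ)) * ∑ j, X j s - X i s| ≤ S + supX i := by
      refine le_trans (abs_sub _ _) (add_le_add ?_ (hsupX i s hs))
      exact le_trans (hXbar s) (hXsum s hs)
    calc |(b + q + (1 - 1 / (n:ℝ)) * φn s) * ((1 / (n:ℝ)) * ∑ j, X j s - X i s)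
        - (b + q + φi s) * ((1 / (n:ℝ)) * ∑ j, Y j s - Y i s)|
        = |(b + q + φi s) * ((1 / (n:ℝ)) * ∑ j, Z j s - Z i s)
          + Δ s * ((1 / (n:ℝ)) * ∑ j, X j s - X i s)| := by rw [hiden]
      _ ≤ |(b + q + φi s)| * |(1 / (n:ℝ)) * ∑ j, Z j s - Z i s|
          + |Δ s| * |(1 / (n:ℝ)) * ∑ j, X j s - X i s| := by
            refine le_trans (abs_add_le _ _) ?_
            rw [abs_mul, abs_mul]
      _ ≤ K * (w s + |Z i s|) + δ * (S + supX i) := by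
            refine add_le_add (mul_le_mul hB hu (abs_nonneg _) hK)
              (mul_le_mul (hΔle s hs) hv (abs_nonneg _) hδ0)
  -- continuity / integrability of the integrand
  have hintcont : ∀ i, Continuous (fun s =>
      (b + q + (1 - 1 / (n:ℝ)) * φn s) * ((1 / (n:ℝ)) * ∑ j, X j s - X i s)
        - (b + q + φi s) * ((1 / (n:ℝ)) * ∑ j, Y j s - Y i s)) := by
    intro i
    have hXb : Continuous fun s => (1 / (n:ℝ)) * ∑ j, X j s :=
      continuous_const.mul (continuous_finset_sum _ fun j _ => hX j)
    have hYb : Continuous fun s => (1 / (n:ℝ)) * ∑ j, Y j s :=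
      continuous_const.mul (continuous_finset_sum _ fun j _ => hY j)
    exact ((continuous_const.add (continuous_const.mul hφn)).mul (hXb.sub (hX i))).sub
      ((continuous_const.add hφi).mul (hYb.sub (hY i)))
  -- Step C: per-player integral bound
  have hstepC : ∀ i, ∀ t ∈ Set.Icc (0:ℝ) T, |Z i t| ≤ ∫ s in (0:ℝ)..t, gB i s := by
    intro i t ht
    have h1 : Z i t = ∫ s in (0:ℝ)..t,
        ((b + q + (1 - 1 / (n:ℝ)) * φn s) * ((1 / (n:ℝ)) * ∑ j, X j s - X i s)
          - (b + q + φi s) * ((1 / (n:ℝ)) * ∑ j, Y j s - Y i s)) := hSDE i t ht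
    rw [h1]
    calc |∫ s in (0:ℝ)..t,
          ((b + q + (1 - 1 / (n:ℝ)) * φn s) * ((1 / (n:ℝ)) * ∑ j, X j s - X i s)
            - (b + q + φi s) * ((1 / (n:ℝ)) * ∑ j, Y j s - Y i s))|
        ≤ ∫ s in (0:ℝ)..t,
          |(b + q + (1 - 1 / (n:ℝ)) * φn s) * ((1 / (n:ℝ)) * ∑ j, X j s - X i s)
            - (b + q + φi s) * ((1 / (n:ℝ)) * ∑ j, Y j s - Y i s)| := by
          simpa [Real.norm_eq_abs] using
            intervalIntegral.norm_integral_le_integral_norm (μ := volume)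
              (f := fun s => (b + q + (1 - 1 / (n:ℝ)) * φn s) * ((1 / (n:ℝ)) * ∑ j, X j s - X i s)
                - (b + q + φi s) * ((1 / (n:ℝ)) * ∑ j, Y j s - Y i s)) ht.1
      _ ≤ ∫ s in (0:ℝ)..t, gB i s := by
          refine intervalIntegral.integral_mono_on ht.1
            (((hintcont i).abs).intervalIntegrable _ _)
            ((hgBcont i).intervalIntegrable _ _) ?_
          intro s hs
          exact hptwise i s (Set.Icc_subset_Icc_right ht.2 hs)
  -- Step D: monotone in upper limit
  have hstepD : ∀ i, ∀ t ∈ Set.Icc (0:ℝ) T,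
      (∫ s in (0:ℝ)..t, gB i s) ≤ ∫ s in (0:ℝ)..T, gB i s := by
    intro i t ht
    exact intervalIntegral.integral_mono_interval le_rfl ht.1 ht.2
      (ae_of_all _ fun s => hgB0 i s) ((hgBcont i).intervalIntegrable _ _)
  -- Step E: average of the bounds is g
  have hcardsum : ∀ s, ∑ i, |Z i s| = n * w s := by
    intro s
    simp only [hwdef]
    field_simp
  have hsupXsum : ∑ i, supX i = n * S := by
    simp only [hSdef]
    field_simp
  have hstepE : ∀ t : ℝ, (1 / (n:ℝ)) * ∑ i, (∫ s in (0:ℝ)..t, gB i s)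
      = ∫ s in (0:ℝ)..t, g s := by
    intro t
    rw [← intervalIntegral.integral_finset_sum
        (fun i _ => (hgBcont i).intervalIntegrable _ _),
      ← intervalIntegral.integral_const_mul]
    refine intervalIntegral.integral_congr fun s _ => ?_
    simp only [hgBdef, hgdef]
    rw [Finset.sum_add_distrib, ← Finset.mul_sum, ← Finset.mul_sum,
      Finset.sum_add_distrib, Finset.sum_add_distrib, hcardsum s, hsupXsum]
    simp only [Finset.sum_const, Finset.card_univ, Fintype.card_fin, nsmul_eq_mul]
    field_simp
    ring
  set F : ℝ → ℝ := fun t => ∫ s in (0:ℝ)..t, g s with hFdef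
  -- Step F: w ≤ F on [0,T]
  have hwF : ∀ t ∈ Set.Icc (0:ℝ) T, w t ≤ F t := by
    intro t ht
    have h1 : w t ≤ (1 / (n:ℝ)) * ∑ i, (∫ s in (0:ℝ)..t, gB i s) := by
      apply mul_le_mul_of_nonneg_left _ hinv
      exact Finset.sum_le_sum fun i _ => hstepC i t ht
    rw [hstepE t] at h1
    exact h1
  -- Step G: derivative of F
  have hFderiv : ∀ t : ℝ, HasDerivAt F (g t) t := by
    intro t
    exact intervalIntegral.integral_hasDerivAt_right
      (hgcont.intervalIntegrable _ _)
      (hgcont.stronglyMeasurableAtFilter _ _)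
      hgcont.continuousAt
  have hFcont : Continuous F := by
    rw [continuous_iff_continuousAt]
    exact fun t => (hFderiv t).continuousAt
  have hF0 : ∀ t ∈ Set.Icc (0:ℝ) T, 0 ≤ F t := by
    intro t ht
    exact intervalIntegral.integral_nonneg ht.1 fun s _ => hg0 s
  -- Step H: Gronwall
  have hgron := norm_le_gronwallBound_of_norm_deriv_right_le (f := F) (f' := g)
    (δ := 0) (K := K') (ε := 2 * (δ * S)) (a := 0) (b := T)
    hFcont.continuousOn
    (fun t _ => (hFderiv t).hasDerivWithinAt)
    (by simp [hFdef, intervalIntegral.integral_same])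
    ?bound T (Set.right_mem_Icc.2 hT.le)
  case bound =>
    intro t ht
    have htI : t ∈ Set.Icc (0:ℝ) T := ⟨ht.1, ht.2.le⟩
    have h1 : ‖g t‖ = g t := Real.norm_of_nonneg (hg0 t)
    have h2 : ‖F t‖ = F t := Real.norm_of_nonneg (hF0 t htI)
    rw [h1, h2]
    have h3 : w t ≤ F t := hwF t htI
    have h4 : 0 ≤ F t := hF0 t htI
    simp only [hgdef, hK'def]
    nlinarith [hw0 t, hδ0, hS0, hK]
  have hFT : F T ≤ 2 * Real.exp (K' * T) * δ * S := by
    have h1 : ‖F T‖ = F T := Real.norm_of_nonneg (hF0 T (Set.right_mem_Icc.2 hT.le))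
    rw [h1] at hgron
    have hK'0 : K' ≠ 0 := by positivity
    rw [gronwallBound_of_K_ne_0 hK'0] at hgron
    simp only [zero_mul, zero_add, sub_zero] at hgron
    refine le_trans hgron ?_
    have he : 0 ≤ Real.exp (K' * T) - 1 := by
      have : (1:ℝ) ≤ Real.exp (K' * T) := by
        rw [← Real.exp_zero]
        exact Real.exp_le_exp.2 (by positivity)
      linarith
    have hd : 2 * (δ * S) / K' ≤ 2 * (δ * S) :=
      div_le_self (by positivity) hK'1
    calc 2 * (δ * S) / K' * (Real.exp (K' * T) - 1)
        ≤ 2 * (δ * S) * Real.exp (K' * T) := by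
          refine mul_le_mul hd ?_ he (by positivity)
          linarith [Real.exp_pos (K' * T)]
      _ = 2 * Real.exp (K' * T) * δ * S := by ring
  -- Step I: conclusion
  have hfinal : (1 / (n:ℝ)) * ∑ i, (⨆ t ∈ Set.Icc (0:ℝ) T, |X i t - Y i t|) ≤ F T := by
    have h1 : ∀ i, (⨆ t ∈ Set.Icc (0:ℝ) T, |X i t - Y i t|) ≤ ∫ s in (0:ℝ)..T, gB i s := by
      intro i
      refine lq_biSup_abs_le ?_ ?_
      · exact intervalIntegral.integral_nonneg hT.le fun s _ => hgB0 i s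
      · intro t ht
        exact le_trans (hstepC i t ht) (hstepD i t ht)
    have h2 : (1 / (n:ℝ)) * ∑ i, (⨆ t ∈ Set.Icc (0:ℝ) T, |X i t - Y i t|)
        ≤ (1 / (n:ℝ)) * ∑ i, (∫ s in (0:ℝ)..T, gB i s) := by
      apply mul_le_mul_of_nonneg_left _ hinv
      exact Finset.sum_le_sum fun i _ => h1 i
    rw [hstepE T] at h2
    exact h2
  calc (1 / (n:ℝ)) * ∑ i, (⨆ t ∈ Set.Icc (0:ℝ) T, |X i t - Y i t|)
      ≤ F T := hfinal
    _ ≤ 2 * Real.exp (K' * T) * δ * S := hFT
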